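/- Let L be a Moufang loop containing a group T generated by a set S, and an element u such that ((g₁g₂)u)² = 1 for all g₁,g₂ ∈ S ∪ {e}. Then for all generators sᵢ,sⱼ ∈ S the Chein relations hold: sᵢ(sⱼu) = (sⱼsᵢ)u, (sᵢu)sⱼ = (sᵢsⱼ⁻¹)u, and (sᵢu)(sⱼu) = sⱼ⁻¹sᵢ. -/
import Mathlib


/-- A Moufang loop: a loop (a quasigroup with two-sided identity) satisfying the
Moufang identities (m1) `z(x(yx)) = ((zx)y)x`, (m2) `x(y(xz)) = ((xy)x)z`,
(m3) `(xy)(zx) = x((yz)x)`. -/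
class MoufangLoop (L : Type*) extends Mul L, One L where
  one_mul : ∀ a : L, 1 * a = a
  mul_one : ∀ a : L, a * 1 = a
  left_bij : ∀ a : L, Function.Bijective fun x : L => a * x
  right_bij : ∀ a : L, Function.Bijective fun x : L => x * a
  m1 : ∀ x y z : L, z * (x * (y * x)) = ((z * x) * y) * x
  m2 : ∀ x y z : L, x * (y * (x * z)) = ((x * y) * x) * z
  m3 : ∀ x y z : L, (x * y) * (z * x) = x * ((y * z) * x)

/-- The subset `T` of the Moufang loop `L`, together with the inversion map `inv`,
forms a subgroup of `L`: it contains the identity, is closed under multiplication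
and inversion, multiplication restricted to `T` is associative, and `inv` provides
two-sided inverses in `T`. -/
structure IsSubgroupOfLoop {L : Type*} [MoufangLoop L] (T : Set L) (inv : L → L) : Prop where
  one_mem : (1 : L) ∈ T
  mul_mem : ∀ a ∈ T, ∀ b ∈ T, a * b ∈ T
  inv_mem : ∀ a ∈ T, inv a ∈ T
  assoc : ∀ a ∈ T, ∀ b ∈ T, ∀ c ∈ T, (a * b) * c = a * (b * c)
  mul_inv : ∀ a ∈ T, a * inv a = 1
  inv_mul : ∀ a ∈ T, inv a * a = 1

/-- `T` is generated (as a group) by the subset `S`: every element of `T` is an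
iterated product of elements of `S` and their inverses. -/
def GeneratedBy {L : Type*} [MoufangLoop L] (T : Set L) (inv : L → L) (S : Set L) : Prop :=
  S ⊆ T ∧ ∀ w ∈ T, ∃ l : List L,
    (∀ x ∈ l, x ∈ S ∨ ∃ s ∈ S, x = inv s) ∧ w = l.foldr (· * ·) 1

namespace MoufangLoopAux

open MoufangLoop

variable {L : Type*} [MoufangLoop L]

lemma mul_left_cancel' {a x y : L} (h : a * x = a * y) : x = y :=
  (MoufangLoop.left_bij a).1 h

lemma mul_right_cancel' {a x y : L} (h : x * a = y * a) : x = y :=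
  (MoufangLoop.right_bij a).1 h

noncomputable def linv (a : L) : L := ((MoufangLoop.right_bij a).2 1).choose

lemma linv_mul (a : L) : linv a * a = 1 := ((MoufangLoop.right_bij a).2 1).choose_spec

lemma lip (a w : L) : linv a * (a * w) = w := by
  obtain ⟨y, hy⟩ := (MoufangLoop.right_bij a).2 w
  simp only at hy
  subst hy
  have h := MoufangLoop.m1 a y (linv a)
  rw [linv_mul, MoufangLoop.one_mul] at h
  exact h

lemma mul_linv (a : L) : a * linv a = 1 := by
  obtain ⟨r, hr⟩ := (MoufangLoop.left_bij a).2 1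
  simp only at hr
  have h := lip a r
  rw [hr, MoufangLoop.mul_one] at h
  rw [h]
  exact hr

lemma eq_linv_of_mul_left {a b : L} (h : b * a = 1) : b = linv a :=
  mul_right_cancel' (a := a) (by rw [h, linv_mul])

lemma eq_linv_of_mul_right {a b : L} (h : a * b = 1) : b = linv a := by
  have h2 := lip a b
  rw [h, MoufangLoop.mul_one] at h2
  exact h2.symm

lemma linv_linv (a : L) : linv (linv a) = a :=
  (eq_linv_of_mul_left (mul_linv a)).symm

lemma rip (z a : L) : (z * a) * linv a = z := by
  have h := MoufangLoop.m1 a (linv a) z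
  rw [linv_mul, MoufangLoop.mul_one] at h
  exact mul_right_cancel' (a := a) h.symm

lemma rip' (z a : L) : (z * linv a) * a = z := by
  have h := rip z (linv a)
  rwa [linv_linv] at h

lemma linv_mul_rev (a b : L) : linv (a * b) = linv b * linv a := by
  have h1 : linv (a * b) * a = linv b := by
    have h := lip (a * b) (linv b)
    rwa [rip a b] at h
  calc linv (a * b) = (linv (a * b) * a) * linv a := (rip _ a).symm
    _ = linv b * linv a := by rw [h1]

lemma self_linv {a : L} (h : a * a = 1) : linv a = a := (eq_linv_of_mul_left h).symm

end MoufangLoopAux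

open MoufangLoopAux in
/-- Lemma 2.2: if `L` is a Moufang loop containing a group `T` generated by a set `S`,
and `u ∈ L` satisfies `((g₁g₂)u)² = 1` for all `g₁, g₂ ∈ S ∪ {e}`, then the Chein
relations (c1), (c2), (c3) hold for any `sᵢ, sⱼ ∈ S`. -/
theorem chein_relations_on_generators {L : Type*} [MoufangLoop L]
    (T : Set L) (inv : L → L) (S : Set L) (u : L)
    (hT : IsSubgroupOfLoop T inv) (hgen : GeneratedBy T inv S)
    (hu : ∀ g₁ ∈ insert (1 : L) S, ∀ g₂ ∈ insert (1 : L) S,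
      ((g₁ * g₂) * u) * ((g₁ * g₂) * u) = 1) :
    ∀ si ∈ S, ∀ sj ∈ S,
      si * (sj * u) = (sj * si) * u ∧
      (si * u) * sj = (si * inv sj) * u ∧
      (si * u) * (sj * u) = inv sj * si := by
  classical
  intro si hsi sj hsj
  have h1 : (1:L) ∈ insert (1:L) S := Set.mem_insert _ _
  have hsi' : si ∈ insert (1:L) S := Set.mem_insert_of_mem _ hsi
  have hsj' : sj ∈ insert (1:L) S := Set.mem_insert_of_mem _ hsj
  have huu : u * u = 1 := by
    have h := hu 1 h1 1 h1
    rw [MoufangLoop.one_mul, MoufangLoop.one_mul] at h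
    exact h
  have hlu : linv u = u := self_linv huu
  have hR : ∀ g₁ ∈ insert (1:L) S, ∀ g₂ ∈ insert (1:L) S,
      (g₁ * g₂) * u = u * linv (g₁ * g₂) := by
    intro g₁ hg₁ g₂ hg₂
    have h := self_linv (hu g₁ hg₁ g₂ hg₂)
    rw [linv_mul_rev, hlu] at h
    exact h.symm
  have hsu : ∀ s ∈ S, s * u = u * linv s := by
    intro s hs
    have h := hR s (Set.mem_insert_of_mem _ hs) 1 h1
    rwa [MoufangLoop.mul_one] at h
  have u_u : ∀ w : L, u * (u * w) = w := by
    intro w; have h := lip u w; rwa [hlu] at h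
  have husu : ∀ s ∈ S, u * (s * u) = linv s := by
    intro s hs; rw [hsu s hs]; exact u_u _
  have hstar : ∀ z y : L, ((z * u) * y) * u = z * (u * (y * u)) :=
    fun z y => (MoufangLoop.m1 u y z).symm
  have hus : ∀ s ∈ S, u * s = linv s * u := by
    intro s hs
    have h := hstar 1 s
    rw [MoufangLoop.one_mul, MoufangLoop.one_mul, husu s hs] at h
    have h2 := rip (u * s) u
    rw [hlu, h] at h2
    exact h2.symm
  have c2gen : ∀ z : L, ∀ s ∈ S, (z * u) * s = (z * linv s) * u := by
    intro z s hs
    have h := hstar z s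
    rw [husu s hs] at h
    have h2 := rip ((z * u) * s) u
    rw [hlu, h] at h2
    exact h2.symm
  have hTsi := hgen.1 hsi
  have hTsj := hgen.1 hsj
  have hinvsi : inv si = linv si := eq_linv_of_mul_left (hT.inv_mul si hTsi)
  have hinvsj : inv sj = linv sj := eq_linv_of_mul_left (hT.inv_mul sj hTsj)
  refine ⟨?_, ?_, ?_⟩
  · have e1 : si * (sj * u) = (u * (u * si)) * (sj * u) := by rw [u_u]
    rw [e1, MoufangLoop.m3 u (u * si) sj, hus si hsi, hstar (linv si) sj,
      husu sj hsj, hR sj hsj' si hsi', linv_mul_rev]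
  · rw [c2gen si sj hsj, hinvsj]
  · have hz : ((sj * si) * u) * si = sj * u := by
      rw [c2gen (sj * si) si hsi, rip]
    have hm := MoufangLoop.m3 si u ((sj * si) * u)
    rw [hz] at hm
    rw [hm, hR sj hsj' si hsi', u_u, linv_mul_rev, ← hinvsi, ← hinvsj]
    have hIi := hT.inv_mem si hTsi
    have hIj := hT.inv_mem sj hTsj
    rw [← hT.assoc si hTsi (inv si * inv sj) (hT.mul_mem _ hIi _ hIj) si hTsi,
        ← hT.assoc si hTsi (inv si) hIi (inv sj) hIj,
        hT.mul_inv si hTsi, MoufangLoop.one_mul]
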